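/- For any real number λ with 1/2 < λ < 1, any real z, and any vector (p,r,q) ∈ ℤ² × ℕ with q ≥ 1, there exists an integer vector (a,b,c) with (a,b) ≠ (0,0), ap + br + cq = 0, |a| ≤ q^λ, and |b + z·a| ≤ q^(1-λ). -/

import Mathlib

lemma dirichlet' (α : ℝ) {N : ℕ} (hN : 0 < N) :
    ∃ k : ℕ, 1 ≤ k ∧ k ≤ N ∧ ∃ s : ℤ, |k * α - s| ≤ 1 / (N + 1) := by
  obtain ⟨j, hj, h⟩ := AddCircle.exists_norm_nsmul_le (T := (1:ℝ)) (α : AddCircle (1:ℝ)) hN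
  refine ⟨j, hj.1, hj.2, round (j * α), ?_⟩
  have e : (j • (α : AddCircle (1:ℝ))) = ((j * α : ℝ) : AddCircle (1:ℝ)) := by
    rw [← AddCircle.coe_nsmul, nsmul_eq_mul]
  rw [e, UnitAddCircle.norm_eq] at h
  push_cast at h ⊢
  linarith [h]

theorem minkowski_linear_forms_application
    (lam : ℝ) (hlam : lam ∈ Set.Ioo (1/2 : ℝ) 1) (z : ℝ)
    (p r : ℤ) (q : ℕ) (hq : 1 ≤ q) :
    ∃ a b c : ℤ, (a, b) ≠ (0, 0) ∧ a * p + b * r + c * q = 0 ∧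
      |(a : ℝ)| ≤ (q : ℝ) ^ lam ∧ |(b : ℝ) + z * a| ≤ (q : ℝ) ^ (1 - lam) := by
  have hq0 : (0:ℝ) < q := by exact_mod_cast hq
  have hql : (0:ℝ) < (q:ℝ) ^ lam := Real.rpow_pos_of_pos hq0 _
  have hql' : (0:ℝ) < (q:ℝ) ^ (1 - lam) := Real.rpow_pos_of_pos hq0 _
  have hmul : (q:ℝ) ^ (1 - lam) * (q:ℝ) ^ lam = q := by
    rw [← Real.rpow_add hq0]; norm_num
  set A : ℕ := ⌊(q:ℝ) ^ lam⌋₊ with hAdef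
  have hA : (A:ℝ) ≤ (q:ℝ) ^ lam := Nat.floor_le hql.le
  have hA1 : (q:ℝ) ^ lam < A + 1 := Nat.lt_floor_add_one _
  set g : ℕ := Int.gcd r q with hgdef
  have hgpos : 0 < g := by
    rcases Nat.eq_zero_or_pos g with h | h
    · exfalso
      have := Int.gcd_eq_zero_iff.mp h
      have : (q:ℤ) = 0 := this.2
      omega
    · exact h
  have hgr : (g:ℤ) ∣ r := Int.gcd_dvd_left r q
  have hgq : g ∣ q := by
    have := Int.gcd_dvd_right (a := r) (b := (q:ℤ))
    exact_mod_cast this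
  set Q : ℕ := q / g with hQdef
  have hQ : q = g * Q := (Nat.mul_div_cancel' hgq).symm
  have hQpos : 0 < Q := Nat.div_pos (Nat.le_of_dvd (by omega) hgq) hgpos
  set r' : ℤ := r / g with hr'def
  have hr' : r = g * r' := (Int.mul_ediv_cancel' hgr).symm
  set d : ℕ := Int.gcd p (g:ℤ) with hddef
  have hdpos : 0 < d := by
    rcases Nat.eq_zero_or_pos d with h | h
    · exfalso
      have := Int.gcd_eq_zero_iff.mp h
      have : ((g:ℤ)) = 0 := this.2
      omega
    · exact h
  have hdp : (d:ℤ) ∣ p := Int.gcd_dvd_left p (g:ℤ)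
  have hdg : d ∣ g := by
    have := Int.gcd_dvd_right (a := p) (b := (g:ℤ))
    exact_mod_cast this
  set m : ℕ := g / d with hmdef
  have hm : g = d * m := (Nat.mul_div_cancel' hdg).symm
  have hmpos : 0 < m := Nat.div_pos (Nat.le_of_dvd hgpos hdg) hdpos
  set p' : ℤ := p / d with hp'def
  have hp' : p = d * p' := (Int.mul_ediv_cancel' hdp).symm
  have hmQ : m * Q ≤ q := by
    calc m * Q ≤ d * (m * Q) := Nat.le_mul_of_pos_left _ hdpos
    _ = (d * m) * Q := by ring
    _ = q := by rw [← hm, ← hQ]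
  by_cases hcase : A < m
  · -- fallback: a = 0, b = Q, c = -r'
    refine ⟨0, Q, -r', ?_, ?_, ?_, ?_⟩
    · simp only [ne_eq, Prod.mk.injEq]
      intro h
      have : (Q:ℤ) = 0 := h.2
      omega
    · have hqz : (q:ℤ) = (g:ℤ) * Q := by exact_mod_cast hQ
      linear_combination (Q:ℤ) * hr' - r' * hqz
    · simpa using hql.le
    · have hmr : (q:ℝ) ^ lam < m := by
        have : (A:ℝ) + 1 ≤ m := by exact_mod_cast hcase
        linarith
      have h1 : (Q:ℝ) * m ≤ q := by
        rw [mul_comm]; exact_mod_cast hmQ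
      have h2 : (Q:ℝ) * (q:ℝ)^lam < (q:ℝ)^(1-lam) * (q:ℝ)^lam := by
        calc (Q:ℝ) * (q:ℝ)^lam < (Q:ℝ) * m := by
              apply mul_lt_mul_of_pos_left hmr (by exact_mod_cast hQpos)
        _ ≤ q := h1
        _ = (q:ℝ)^(1-lam) * (q:ℝ)^lam := hmul.symm
      have h3 : (Q:ℝ) < (q:ℝ)^(1-lam) := lt_of_mul_lt_mul_right h2 hql.le
      push_cast
      rw [mul_zero, add_zero, abs_of_nonneg (by positivity)]
      exact h3.le
  · push_neg at hcase  -- m ≤ A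
    set N : ℕ := A / m with hNdef
    have hNpos : 0 < N := Nat.one_le_div_iff hmpos |>.mpr hcase
    set u : ℤ := Int.gcdA r q with hudef
    set v : ℤ := Int.gcdB r q with hvdef
    have hbez : (g:ℤ) = r * u + (q:ℤ) * v := Int.gcd_eq_gcd_ab r q
    set β : ℤ := -(p' * u) with hβdef
    set e : ℤ := p' * v with hedef
    have hgz : (g:ℤ) = (d:ℤ) * m := by exact_mod_cast hm
    have hlat : (m:ℤ) * p + β * r = e * q := by
      linear_combination (m:ℤ) * hp' + p' * hbez - p' * hgz
    obtain ⟨k, hk1, hkN, s, hks⟩ := dirichlet' (((β:ℝ) + z * m) / Q) hNpos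
    refine ⟨(k:ℤ) * m, (k:ℤ) * β - s * Q, s * r' - (k:ℤ) * e, ?_, ?_, ?_, ?_⟩
    · simp only [ne_eq, Prod.mk.injEq]
      intro h
      have h1 : (k:ℤ) * m = 0 := h.1
      have : (1:ℤ) ≤ (k:ℤ) * m := by
        have : 1 ≤ k * m := Nat.one_le_iff_ne_zero.mpr (Nat.mul_ne_zero (by omega) (by omega))
        exact_mod_cast this
      omega
    · have hqz : (q:ℤ) = (g:ℤ) * Q := by exact_mod_cast hQ
      linear_combination (k:ℤ) * hlat - (s * Q) * hr' + (s * r') * hqz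
    · have hkm : k * m ≤ A := by
        calc k * m ≤ N * m := Nat.mul_le_mul_right _ hkN
        _ ≤ A := Nat.div_mul_le_self _ _
      have : |((k:ℝ) * m)| = (k:ℝ) * m := abs_of_nonneg (by positivity)
      push_cast
      rw [this]
      calc (k:ℝ) * m = ((k * m : ℕ) : ℝ) := by push_cast; ring
      _ ≤ A := by exact_mod_cast hkm
      _ ≤ (q:ℝ)^lam := hA
    · -- |b + z a| ≤ q^(1-lam)
      have hQR : (0:ℝ) < Q := by exact_mod_cast hQpos
      have hαQ : (((β:ℝ) + z * m) / Q) * Q = (β:ℝ) + z * m := by field_simp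
      have hval : ((k:ℤ) * β - s * Q : ℤ) + z * ((k:ℤ) * m : ℤ) =
          (Q:ℝ) * ((k:ℝ) * (((β:ℝ) + z * m) / Q) - s) := by
        push_cast
        field_simp
        ring
      have hbound : (Q:ℝ) * (1 / (N + 1)) ≤ (q:ℝ)^(1-lam) := by
        have hstep : (A:ℝ) + 1 ≤ (m:ℝ) * (N + 1) := by
          have h0 : A < (N + 1) * m := (Nat.div_lt_iff_lt_mul hmpos).mp (Nat.lt_succ_self N)
          have h0' : A + 1 ≤ (N + 1) * m := h0
          have : (A:ℝ) + 1 ≤ (((N + 1) * m : ℕ) : ℝ) := by exact_mod_cast h0'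
          push_cast at this
          linarith
        have h1 : (Q:ℝ) * m ≤ q := by
          rw [mul_comm]; exact_mod_cast hmQ
        have h2 : (q:ℝ) < (q:ℝ)^(1-lam) * ((N:ℝ)+1) * m := by
          calc (q:ℝ) = (q:ℝ)^(1-lam) * (q:ℝ)^lam := hmul.symm
          _ < (q:ℝ)^(1-lam) * ((A:ℝ)+1) := by
              apply mul_lt_mul_of_pos_left (by linarith) hql'
          _ ≤ (q:ℝ)^(1-lam) * ((m:ℝ) * ((N:ℝ)+1)) := by
              apply mul_le_mul_of_nonneg_left _ hql'.le
              exact_mod_cast hstep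
          _ = (q:ℝ)^(1-lam) * ((N:ℝ)+1) * m := by ring
        have hmR : (0:ℝ) < m := by exact_mod_cast hmpos
        have hQlt : (Q:ℝ) < (q:ℝ)^(1-lam) * ((N:ℝ)+1) := by
          have := h1.trans_lt h2
          calc (Q:ℝ) = (Q:ℝ) * m / m := by field_simp
          _ < (q:ℝ)^(1-lam) * ((N:ℝ)+1) * m / m := by
              apply div_lt_div_of_pos_right (by linarith) hmR
          _ = (q:ℝ)^(1-lam) * ((N:ℝ)+1) := by field_simp
        rw [mul_one_div, div_le_iff₀ (by positivity)]
        linarith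
      rw [hval, abs_mul, abs_of_nonneg hQR.le]
      calc (Q:ℝ) * |(k:ℝ) * (((β:ℝ) + z * m) / Q) - s| ≤ (Q:ℝ) * (1 / (N + 1)) := by
            apply mul_le_mul_of_nonneg_left _ hQR.le
            convert hks using 3 <;> push_cast <;> ring
      _ ≤ (q:ℝ)^(1-lam) := hbound
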